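/- For l ∈ ℕ let W_l H ⊆ H denote the ℂ-linear span of all products x_{a_1}⋯x_{a_p} · y_{b_1}⋯y_{b_q} · w with p + q ≤ l, indices a_r, b_s ∈ {1,…,n}, and w ∈ S_n. Let M be a left H-module and B : M × M → ℂ a bilinear form satisfying B(x_i·f, g) = B(f, x_i·g) and B(y_i·f, g) = B(f, y_i·g) for all 1 ≤ i ≤ n, and B(w·f, g) = B(f, sgn(w)·w^{-1}·g) for all w ∈ S_n and all f, g ∈ M. Let t ∈ M and m ∈ ℕ, and suppose B(t, h·t) = 0 for every l < m and every h ∈ W_l H. Then B(h·t, h'·t) = 0 whenever h ∈ W_l H, h' ∈ W_{l'} H and l + l' < m. -/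

import Mathlib

noncomputable section

/-- Generators of the rational Cherednik algebra of `S_n` at `t = 0`. -/
inductive CherGen (n : ℕ) : Type
  | x : Fin n → CherGen n
  | y : Fin n → CherGen n
  | T : Equiv.Perm (Fin n) → CherGen n

namespace Cherednik

variable (n : ℕ)

/-- The free algebra on the generators. -/
abbrev F := FreeAlgebra ℂ (CherGen n)

def fx (i : Fin n) : F n := FreeAlgebra.ι ℂ (CherGen.x i)
def fy (i : Fin n) : F n := FreeAlgebra.ι ℂ (CherGen.y i)
def fT (w : Equiv.Perm (Fin n)) : F n := FreeAlgebra.ι ℂ (CherGen.T w)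

/-- `s_{ij}`, the transposition interchanging `i` and `j`. -/
def fs (i j : Fin n) : F n := fT n (Equiv.swap i j)

/-- The defining relations of the rational Cherednik algebra at `t = 0`. -/
inductive Rel : F n → F n → Prop
  | T_mul (u v : Equiv.Perm (Fin n)) : Rel (fT n u * fT n v) (fT n (u * v))
  | T_one : Rel (fT n 1) 1
  | x_comm (i j : Fin n) : Rel (fx n i * fx n j) (fx n j * fx n i)
  | y_comm (i j : Fin n) : Rel (fy n i * fy n j) (fy n j * fy n i)
  | w_x (w : Equiv.Perm (Fin n)) (i : Fin n) :
      Rel (fT n w * fx n i) (fx n (w i) * fT n w)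
  | w_y (w : Equiv.Perm (Fin n)) (i : Fin n) :
      Rel (fT n w * fy n i) (fy n (w i) * fT n w)
  | yx_same (i : Fin n) :
      Rel (fy n i * fx n i)
        (fx n i * fy n i - ∑ j ∈ Finset.univ.filter (fun j => j ≠ i), fs n i j)
  | yx_ne (i j : Fin n) (h : i ≠ j) :
      Rel (fy n i * fx n j) (fx n j * fy n i + fs n i j)

/-- The rational Cherednik algebra `H` of `S_n` at `t = 0`. -/
abbrev H := RingQuot (Rel n)

def hx (i : Fin n) : H n := RingQuot.mkAlgHom ℂ (Rel n) (fx n i)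
def hy (i : Fin n) : H n := RingQuot.mkAlgHom ℂ (Rel n) (fy n i)
def hT (w : Equiv.Perm (Fin n)) : H n := RingQuot.mkAlgHom ℂ (Rel n) (fT n w)
def hs (i j : Fin n) : H n := hT n (Equiv.swap i j)

end Cherednik

namespace Cherednik

/-- The filtration `W_l H`: the ℂ-linear span of products
`x_{a_1}⋯x_{a_p} · y_{b_1}⋯y_{b_q} · w` with `p + q ≤ l` and `w ∈ S_n`. -/
def WH (n l : ℕ) : Submodule ℂ (H n) :=
  Submodule.span ℂ { h : H n |
    ∃ p q : ℕ, p + q ≤ l ∧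
      ∃ (a : Fin p → Fin n) (b : Fin q → Fin n) (w : Equiv.Perm (Fin n)),
        h = (List.ofFn fun r => hx n (a r)).prod *
            (List.ofFn fun s => hy n (b s)).prod * hT n w }

end Cherednik

namespace Cherednik

variable {n : ℕ}

lemma hT_mul (u v : Equiv.Perm (Fin n)) : hT n u * hT n v = hT n (u * v) := by
  rw [hT, hT, hT, ← map_mul]
  exact RingQuot.mkAlgHom_rel ℂ (Rel.T_mul u v)

lemma hT_one : hT n 1 = 1 := by
  rw [hT]
  have := RingQuot.mkAlgHom_rel ℂ (Rel.T_one (n := n))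
  simpa using this

lemma hT_hx (w : Equiv.Perm (Fin n)) (i : Fin n) :
    hT n w * hx n i = hx n (w i) * hT n w := by
  rw [hT, hx, hx, ← map_mul, ← map_mul]
  exact RingQuot.mkAlgHom_rel ℂ (Rel.w_x w i)

lemma hT_hy (w : Equiv.Perm (Fin n)) (i : Fin n) :
    hT n w * hy n i = hy n (w i) * hT n w := by
  rw [hT, hy, hy, ← map_mul, ← map_mul]
  exact RingQuot.mkAlgHom_rel ℂ (Rel.w_y w i)

lemma hy_hx_same (i : Fin n) :
    hy n i * hx n i =
      hx n i * hy n i - ∑ j ∈ Finset.univ.filter (fun j => j ≠ i), hs n i j := by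
  have := RingQuot.mkAlgHom_rel ℂ (Rel.yx_same (n := n) i)
  simpa [hy, hx, hs, hT, fs, map_sub, map_sum, map_mul] using this

lemma hy_hx_ne (i j : Fin n) (h : i ≠ j) :
    hy n i * hx n j = hx n j * hy n i + hs n i j := by
  have := RingQuot.mkAlgHom_rel ℂ (Rel.yx_ne (n := n) i j h)
  simpa [hy, hx, hs, hT, fs, map_add, map_mul] using this

/-- monomial membership -/
lemma monomial_mem (L1 L2 : List (Fin n)) (w : Equiv.Perm (Fin n)) {l : ℕ}
    (h : L1.length + L2.length ≤ l) :
    (L1.map (hx n)).prod * (L2.map (hy n)).prod * hT n w ∈ WH n l := by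
  apply Submodule.subset_span
  refine ⟨L1.length, L2.length, h, L1.get, L2.get, w, ?_⟩
  have e1 : (List.ofFn fun r => hx n (L1.get r)) = L1.map (hx n) := by
    rw [show (fun r => hx n (L1.get r)) = (hx n) ∘ L1.get from rfl, ← List.map_ofFn,
      List.ofFn_get]
  have e2 : (List.ofFn fun s => hy n (L2.get s)) = L2.map (hy n) := by
    rw [show (fun s => hy n (L2.get s)) = (hy n) ∘ L2.get from rfl, ← List.map_ofFn,
      List.ofFn_get]
  rw [e1, e2]

lemma WH_mono {l l' : ℕ} (h : l ≤ l') : WH n l ≤ WH n l' := by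
  apply Submodule.span_mono
  rintro z ⟨p, q, hpq, a, b, w, rfl⟩
  exact ⟨p, q, hpq.trans h, a, b, w, rfl⟩

end Cherednik
namespace Cherednik

variable {n : ℕ}

lemma ofFn_eq_map {p : ℕ} (a : Fin p → Fin n) (g : Fin n → H n) :
    (List.ofFn fun r => g (a r)) = (List.ofFn a).map g := (List.map_ofFn (f := a) (g := g)).symm

lemma hT_mul_xprod (w : Equiv.Perm (Fin n)) (L : List (Fin n)) :
    hT n w * (L.map (hx n)).prod = ((L.map w).map (hx n)).prod * hT n w := by
  induction L with
  | nil => simp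
  | cons i L ih =>
    rw [List.map_cons, List.prod_cons, ← mul_assoc, hT_hx, mul_assoc, ih,
      List.map_cons, List.map_cons, List.prod_cons, mul_assoc]

lemma hT_mul_yprod (w : Equiv.Perm (Fin n)) (L : List (Fin n)) :
    hT n w * (L.map (hy n)).prod = ((L.map w).map (hy n)).prod * hT n w := by
  induction L with
  | nil => simp
  | cons i L ih =>
    rw [List.map_cons, List.prod_cons, ← mul_assoc, hT_hy, mul_assoc, ih,
      List.map_cons, List.map_cons, List.prod_cons, mul_assoc]

lemma hT_mul_monomial (w : Equiv.Perm (Fin n)) (L1 L2 : List (Fin n))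
    (v : Equiv.Perm (Fin n)) :
    hT n w * ((L1.map (hx n)).prod * (L2.map (hy n)).prod * hT n v) =
      ((L1.map w).map (hx n)).prod * ((L2.map w).map (hy n)).prod * hT n (w * v) := by
  rw [← mul_assoc, ← mul_assoc, hT_mul_xprod, mul_assoc _ (hT n w), hT_mul_yprod,
    ← mul_assoc, mul_assoc _ (hT n w), hT_mul, mul_assoc]

lemma hT_mul_mem (w : Equiv.Perm (Fin n)) {l : ℕ} {h : H n} (hh : h ∈ WH n l) :
    hT n w * h ∈ WH n l := by
  induction hh using Submodule.span_induction with
  | mem z hz =>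
    obtain ⟨p, q, hpq, a, b, v, rfl⟩ := hz
    rw [ofFn_eq_map a (hx n), ofFn_eq_map b (hy n), hT_mul_monomial]
    exact monomial_mem _ _ _ (by simpa using hpq)
  | zero => simp
  | add z1 z2 h1 h2 ih1 ih2 => rw [mul_add]; exact (WH n l).add_mem ih1 ih2
  | smul c z hz ih => rw [mul_smul_comm]; exact (WH n l).smul_mem c ih

lemma hx_mul_mem (i : Fin n) {l : ℕ} {h : H n} (hh : h ∈ WH n l) :
    hx n i * h ∈ WH n (l + 1) := by
  induction hh using Submodule.span_induction with
  | mem z hz =>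
    obtain ⟨p, q, hpq, a, b, v, rfl⟩ := hz
    rw [ofFn_eq_map a (hx n), ofFn_eq_map b (hy n), ← mul_assoc, ← mul_assoc,
      show hx n i * ((List.ofFn a).map (hx n)).prod =
        ((i :: List.ofFn a).map (hx n)).prod by rw [List.map_cons, List.prod_cons]]
    exact monomial_mem _ _ _ (by simp; omega)
  | zero => simp
  | add z1 z2 h1 h2 ih1 ih2 => rw [mul_add]; exact Submodule.add_mem _ ih1 ih2
  | smul c z hz ih => rw [mul_smul_comm]; exact Submodule.smul_mem _ c ih

lemma hy_mul_monomial (i : Fin n) (L1 L2 : List (Fin n)) (w : Equiv.Perm (Fin n))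
    {l : ℕ} (hl : L1.length + L2.length ≤ l) :
    hy n i * ((L1.map (hx n)).prod * (L2.map (hy n)).prod * hT n w) ∈ WH n (l + 1) := by
  induction L1 generalizing l with
  | nil =>
    simp only [List.map_nil, List.prod_nil, one_mul]
    rw [← mul_assoc, show hy n i * (L2.map (hy n)).prod =
      ((i :: L2).map (hy n)).prod by rw [List.map_cons, List.prod_cons]]
    have : (1 : H n) * ((i :: L2).map (hy n)).prod * hT n w ∈ WH n (l + 1) := by
      refine monomial_mem [] _ _ ?_
      simp at hl ⊢; omega
    simpa using this
  | cons j L1 ih =>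
    simp only [List.length_cons] at hl
    have hl' : L1.length + L2.length ≤ l - 1 := by omega
    have hrest : (L1.map (hx n)).prod * (L2.map (hy n)).prod * hT n w ∈ WH n (l - 1) :=
      monomial_mem _ _ _ hl'
    have key : hy n i * ((L1.map (hx n)).prod * (L2.map (hy n)).prod * hT n w) ∈
        WH n l := by
      have := ih hl'
      have hle : (l - 1) + 1 ≤ l := by omega
      exact WH_mono hle this
    set rest := (L1.map (hx n)).prod * (L2.map (hy n)).prod * hT n w with hrdef
    rw [show hy n i * (((j :: L1).map (hx n)).prod * (L2.map (hy n)).prod * hT n w)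
        = hy n i * hx n j * rest by
      rw [hrdef]; simp only [List.map_cons, List.prod_cons, mul_assoc]]
    by_cases hij : i = j
    · subst hij
      rw [hy_hx_same, sub_mul]
      refine Submodule.sub_mem _ ?_ ?_
      · rw [mul_assoc]; exact hx_mul_mem i key
      · rw [Finset.sum_mul]
        refine Submodule.sum_mem _ fun k _ => ?_
        have : hs n i k * rest ∈ WH n (l - 1) := hT_mul_mem _ hrest
        exact WH_mono (by omega) this
    · rw [hy_hx_ne i j hij, add_mul]
      refine Submodule.add_mem _ ?_ ?_
      · rw [mul_assoc]; exact hx_mul_mem j key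
      · have : hs n i j * rest ∈ WH n (l - 1) := hT_mul_mem _ hrest
        exact WH_mono (by omega) this

lemma hy_mul_mem (i : Fin n) {l : ℕ} {h : H n} (hh : h ∈ WH n l) :
    hy n i * h ∈ WH n (l + 1) := by
  induction hh using Submodule.span_induction with
  | mem z hz =>
    obtain ⟨p, q, hpq, a, b, v, rfl⟩ := hz
    rw [ofFn_eq_map a (hx n), ofFn_eq_map b (hy n)]
    exact hy_mul_monomial i _ _ _ (by simpa using hpq)
  | zero => simp
  | add z1 z2 h1 h2 ih1 ih2 => rw [mul_add]; exact Submodule.add_mem _ ih1 ih2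
  | smul c z hz ih => rw [mul_smul_comm]; exact Submodule.smul_mem _ c ih

lemma xlist_mul_mem (L : List (Fin n)) {l : ℕ} {h : H n} (hh : h ∈ WH n l) :
    (L.map (hx n)).prod * h ∈ WH n (l + L.length) := by
  induction L with
  | nil => simpa using hh
  | cons i L ih =>
    rw [List.map_cons, List.prod_cons, mul_assoc]
    have := hx_mul_mem i ih
    exact WH_mono (by simp) this

lemma ylist_mul_mem (L : List (Fin n)) {l : ℕ} {h : H n} (hh : h ∈ WH n l) :
    (L.map (hy n)).prod * h ∈ WH n (l + L.length) := by
  induction L with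
  | nil => simpa using hh
  | cons i L ih =>
    rw [List.map_cons, List.prod_cons, mul_assoc]
    have := hy_mul_mem i ih
    exact WH_mono (by simp) this

lemma WH_mul_mem {l l' : ℕ} {h h' : H n} (hh : h ∈ WH n l) (hh' : h' ∈ WH n l') :
    h * h' ∈ WH n (l + l') := by
  induction hh using Submodule.span_induction with
  | mem z hz =>
    obtain ⟨p, q, hpq, a, b, v, rfl⟩ := hz
    rw [ofFn_eq_map a (hx n), ofFn_eq_map b (hy n), mul_assoc, mul_assoc]
    have h1 : hT n v * h' ∈ WH n l' := hT_mul_mem v hh'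
    have h2 := ylist_mul_mem (List.ofFn b) h1
    have h3 := xlist_mul_mem (List.ofFn a) h2
    refine WH_mono ?_ h3
    simp at h3 ⊢; omega
  | zero => simp
  | add z1 z2 h1 h2 ih1 ih2 => rw [add_mul]; exact Submodule.add_mem _ ih1 ih2
  | smul c z hz ih => rw [smul_mul_assoc]; exact Submodule.smul_mem _ c ih

end Cherednik
namespace Cherednik

variable {n : ℕ} {M : Type*} [AddCommGroup M] [Module ℂ M] [Module (H n) M]
  [IsScalarTower ℂ (H n) M] (B : M →ₗ[ℂ] M →ₗ[ℂ] ℂ)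

lemma B_xlist (hBx : ∀ (i : Fin n) (f g : M), B (hx n i • f) g = B f (hx n i • g)) :
    ∀ (L : List (Fin n)) (f g : M),
      B ((L.map (hx n)).prod • f) g = B f ((L.reverse.map (hx n)).prod • g) := by
  intro L
  induction L with
  | nil => simp
  | cons i L ih =>
    intro f g
    rw [List.map_cons, List.prod_cons, mul_smul, hBx, ih, List.reverse_cons,
      List.map_append, List.prod_append]
    simp only [List.map_cons, List.map_nil, List.prod_cons, List.prod_nil, mul_one,
      mul_smul]

lemma B_ylist (hBy : ∀ (i : Fin n) (f g : M), B (hy n i • f) g = B f (hy n i • g)) :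
    ∀ (L : List (Fin n)) (f g : M),
      B ((L.map (hy n)).prod • f) g = B f ((L.reverse.map (hy n)).prod • g) := by
  intro L
  induction L with
  | nil => simp
  | cons i L ih =>
    intro f g
    rw [List.map_cons, List.prod_cons, mul_smul, hBy, ih, List.reverse_cons,
      List.map_append, List.prod_append]
    simp only [List.map_cons, List.map_nil, List.prod_cons, List.prod_nil, mul_one,
      mul_smul]

lemma xprod_mem (L : List (Fin n)) : (L.map (hx n)).prod ∈ WH n L.length := by
  have := monomial_mem (n := n) (l := L.length) L [] 1 (by simp)
  simpa [hT_one] using this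

lemma adjoint_exists
    (hBx : ∀ (i : Fin n) (f g : M), B (hx n i • f) g = B f (hx n i • g))
    (hBy : ∀ (i : Fin n) (f g : M), B (hy n i • f) g = B f (hy n i • g))
    (hBT : ∀ (w : Equiv.Perm (Fin n)) (f g : M),
      B (hT n w • f) g = B f (((Equiv.Perm.sign w : ℤ) : ℂ) • hT n w⁻¹ • g))
    {l : ℕ} {h : H n} (hh : h ∈ WH n l) :
    ∃ h' ∈ WH n l, ∀ f g : M, B (h • f) g = B f (h' • g) := by
  induction hh using Submodule.span_induction with
  | mem z hz =>
    obtain ⟨p, q, hpq, a, b, w, rfl⟩ := hz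
    rw [ofFn_eq_map a (hx n), ofFn_eq_map b (hy n)]
    set L1 := List.ofFn a with hL1
    set L2 := List.ofFn b with hL2
    refine ⟨((Equiv.Perm.sign w : ℤ) : ℂ) •
      (hT n w⁻¹ * ((L2.reverse.map (hy n)).prod * (L1.reverse.map (hx n)).prod)),
      ?_, ?_⟩
    · apply Submodule.smul_mem
      have h1 : (L1.reverse.map (hx n)).prod ∈ WH n L1.reverse.length :=
        xprod_mem _
      have h2 := ylist_mul_mem L2.reverse h1
      have h3 := hT_mul_mem w⁻¹ h2
      refine WH_mono ?_ h3
      simp only [List.length_reverse, hL1, hL2, List.length_ofFn]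
      omega
    · intro f g
      rw [mul_smul, mul_smul, B_xlist B hBx, B_ylist B hBy, hBT]
      congr 1
      rw [smul_assoc, mul_smul, mul_smul]
  | zero => exact ⟨0, Submodule.zero_mem _, by intro f g; simp⟩
  | add z1 z2 hz1 hz2 ih1 ih2 =>
    obtain ⟨k1, hk1, e1⟩ := ih1
    obtain ⟨k2, hk2, e2⟩ := ih2
    refine ⟨k1 + k2, Submodule.add_mem _ hk1 hk2, fun f g => ?_⟩
    simp [add_smul, e1 f g, e2 f g]
  | smul c z hz ih =>
    obtain ⟨k, hk, e⟩ := ih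
    refine ⟨c • k, Submodule.smul_mem _ c hk, fun f g => ?_⟩
    rw [smul_assoc, smul_assoc]
    simp [e f g]

end Cherednik

open Cherednik in
/-- If `B` is a bilinear form on an `H`-module `M` compatible with `x_i`, `y_i` and
`w ↦ sgn(w) w⁻¹`, and `B(t, W_l H · t) = 0` for all `l < m`, then
`B(W_l H · t, W_{l'} H · t) = 0` whenever `l + l' < m`. -/
theorem statement12 (n : ℕ) (hn : 0 < n)
    (M : Type*) [AddCommGroup M] [Module ℂ M] [Module (H n) M]
    [IsScalarTower ℂ (H n) M]
    (B : M →ₗ[ℂ] M →ₗ[ℂ] ℂ)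
    (hBx : ∀ (i : Fin n) (f g : M), B (hx n i • f) g = B f (hx n i • g))
    (hBy : ∀ (i : Fin n) (f g : M), B (hy n i • f) g = B f (hy n i • g))
    (hBT : ∀ (w : Equiv.Perm (Fin n)) (f g : M),
      B (hT n w • f) g = B f (((Equiv.Perm.sign w : ℤ) : ℂ) • hT n w⁻¹ • g))
    (t : M) (m : ℕ)
    (ht : ∀ l, l < m → ∀ h ∈ WH n l, B t (h • t) = 0) :
    ∀ l l', l + l' < m → ∀ h ∈ WH n l, ∀ h' ∈ WH n l', B (h • t) (h' • t) = 0 := by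
  intro l l' hll' h hh h' hh'
  obtain ⟨k, hk, e⟩ := adjoint_exists B hBx hBy hBT hh
  rw [e, ← mul_smul]
  exact ht (l + l') hll' (k * h') (WH_mul_mem hk hh')
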